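/- Let D be a finite-dimensional real graded division algebra, with degree-preserving involution φ_0 of the second kind on its center whenever Z(D) ≠ ℝ, such that Z(D) is ℝ, ℂ, or ℝ×ℝ. If Z(D) is nontrivially graded with support {e, f} (f the distinguished element of order 2), then f is not a square in T, and consequently T is an elementary abelian 2-group; the same conclusion holds if Z(D) = ℝ is trivially graded. -/
import Mathlib


variable {G : Type*} [CommGroup G] [DecidableEq G] {D : Type*} [Ring D] [Algebra ℝ D]

/-- A real graded division algebra. -/
def IsGDA (comp : G → Submodule ℝ D) : Prop :=
  DirectSum.IsInternal comp ∧ (1 : D) ∈ comp 1 ∧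
    (∀ (g h : G) (a b : D), a ∈ comp g → b ∈ comp h → a * b ∈ comp (g * h)) ∧
    ∀ (g : G) (a : D), a ∈ comp g → a ≠ 0 → IsUnit a

section Aux

omit [CommGroup G] in
theorem aux_mem_mem_ne {comp : G → Submodule ℝ D} (hInt : DirectSum.IsInternal comp)
    {g h : G} (hne : g ≠ h) {a : D} (hg : a ∈ comp g) (hh : a ∈ comp h) : a = 0 := by
  classical
  letI := hInt.chooseDecomposition
  have h1 := DirectSum.decompose_of_mem_same comp hh
  have h2 := DirectSum.decompose_of_mem_ne comp hg hne
  rw [h2] at h1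
  exact h1.symm

theorem aux_inv_mem {comp : G → Submodule ℝ D} (hInt : DirectSum.IsInternal comp)
    (hone : (1:D) ∈ comp 1)
    (hmul : ∀ (g h : G) (a b : D), a ∈ comp g → b ∈ comp h → a * b ∈ comp (g * h))
    {g : G} {a b : D} (ha : a ∈ comp g) (hab : a * b = 1) (hba : b * a = 1) :
    b ∈ comp g⁻¹ := by
  classical
  letI := hInt.chooseDecomposition
  have hzero : ∀ h : G, h ≠ g⁻¹ → (DirectSum.decompose comp b h : D) = 0 := by
    intro h hne
    have hgh : (1:G) ≠ g * h := fun hc => hne (inv_eq_of_mul_eq_one_right hc.symm).symm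
    have h1 : (DirectSum.decompose comp (1:D) (g*h) : D) = 0 :=
      DirectSum.decompose_of_mem_ne comp hone hgh
    have hb : (1:D) = ∑ i ∈ (DirectSum.decompose comp b).support,
        a * (DirectSum.decompose comp b i : D) := by
      rw [← Finset.mul_sum]
      conv_lhs => rw [← hab]
      congr 1
      exact (DirectSum.sum_support_decompose comp b).symm
    have h3 : ((DirectSum.decompose comp (1:D)) (g*h) : D)
        = ∑ i ∈ (DirectSum.decompose comp b).support,
            ((DirectSum.decompose comp (a * (DirectSum.decompose comp b i : D))) (g*h) : D) := by
      conv_lhs => rw [hb]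
      rw [DirectSum.decompose_sum, DFinsupp.finset_sum_apply]
      push_cast
      rfl
    by_cases hmem : h ∈ (DirectSum.decompose comp b).support
    · have h4 : ∀ i ∈ (DirectSum.decompose comp b).support, i ≠ h →
          ((DirectSum.decompose comp (a * (DirectSum.decompose comp b i : D))) (g*h) : D) = 0 := by
        intro i _ hih
        exact DirectSum.decompose_of_mem_ne comp
          (hmul g i _ _ ha (DirectSum.decompose comp b i).2)
          (by simpa using hih)
      have h5 : ((DirectSum.decompose comp (a * (DirectSum.decompose comp b h : D))) (g*h) : D)
          = a * (DirectSum.decompose comp b h : D) :=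
        DirectSum.decompose_of_mem_same comp (hmul g h _ _ ha (DirectSum.decompose comp b h).2)
      have h6 : (0:D) = a * (DirectSum.decompose comp b h : D) := by
        rw [← h5, ← Finset.sum_eq_single_of_mem h hmem h4, ← h3, h1]
      have h7 := congrArg (fun z => b * z) h6
      simpa [← mul_assoc, hba] using h7.symm
    · rw [DFinsupp.notMem_support_iff.mp hmem]; rfl
  have hmem2 : (∑ i ∈ (DirectSum.decompose comp b).support,
      (DirectSum.decompose comp b i : D)) ∈ comp g⁻¹ := by
    apply Submodule.sum_mem
    intro i hi
    by_cases hig : i = g⁻¹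
    · rw [hig]; exact (DirectSum.decompose comp b g⁻¹).2
    · rw [hzero i hig]; exact Submodule.zero_mem _
  rwa [DirectSum.sum_support_decompose comp b] at hmem2

end Aux

set_option maxHeartbeats 1600000 in
/-- For a finite-dimensional real graded division algebra `D` with a
degree-preserving involution `φ₀` (of the second kind on the center whenever
`Z(D) ≠ ℝ`) whose center is `ℝ`, `ℂ` or `ℝ × ℝ`:
if the center is nontrivially graded with support `{e, f}`, then the
distinguished element `f` is not a square in `T` and consequently `T` is an
elementary abelian 2-group; the same conclusion holds when `Z(D) = ℝ` is
trivially graded. -/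
theorem stmt_13 (comp : G → Submodule ℝ D) (hgda : IsGDA comp)
    (hfdD : FiniteDimensional ℝ D)
    (T : Subgroup G) (hT : ∀ g : G, comp g ≠ ⊥ ↔ g ∈ T)
    (X : ↥T → Dˣ) (hX : ∀ t : ↥T, (X t : D) ∈ comp (t : G))
    -- when `D_e` is noncommutative the `X_t` are chosen in the centralizer of `D_e`
    (hXcent : ¬(∀ z ∈ comp (1 : G), ∀ w ∈ comp (1 : G), z * w = w * z) →
      ∀ (t : ↥T), ∀ z ∈ comp (1 : G), (X t : D) * z = z * (X t : D))
    (φ : D ≃ₗ[ℝ] D)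
    (hanti : ∀ x y : D, φ (x * y) = φ y * φ x)
    (hinvol : ∀ x : D, φ (φ x) = x)
    (hgr : ∀ (g : G), ∀ x ∈ comp g, φ x ∈ comp g)
    (hconj : ∀ z ∈ comp (1 : G),
      (∃ r : ℝ, z + φ z = algebraMap ℝ D r) ∧ ∃ r : ℝ, 0 ≤ r ∧ z * φ z = algebraMap ℝ D r)
    (η : ↥T → ℝ) (hη : ∀ t : ↥T, η t = 1 ∨ η t = -1)
    (hφX : ∀ t : ↥T, φ (X t : D) = η t • (X t : D))
    -- `Z(D)` is `ℝ`, `ℂ` or `ℝ × ℝ`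
    (hZ : Nonempty (↥(Subalgebra.center ℝ D) ≃ₐ[ℝ] ℝ) ∨
      Nonempty (↥(Subalgebra.center ℝ D) ≃ₐ[ℝ] ℂ) ∨
      Nonempty (↥(Subalgebra.center ℝ D) ≃ₐ[ℝ] (ℝ × ℝ)))
    -- `φ₀` is of the second kind whenever `Z(D) ≠ ℝ`
    (hkind : (¬∀ z ∈ Subalgebra.center ℝ D, ∃ r : ℝ, z = algebraMap ℝ D r) →
      ∃ z ∈ Subalgebra.center ℝ D, φ z ≠ z)
    -- `t² ∈ rad β = supp Z(D)` for all `t ∈ T`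
    (hsq : ∀ t : ↥T, ∃ x : D, x ≠ 0 ∧ x ∈ comp ((t : G) * t) ∧ ∀ y : D, x * y = y * x) :
    -- Case A: `Z(D)` nontrivially graded with support `{e, f}`
    (∀ f : G, f ≠ 1 →
      (∃ x : D, x ≠ 0 ∧ x ∈ comp f ∧ ∀ y : D, x * y = y * x) →
      (∀ g : G, g ≠ 1 → g ≠ f → ∀ x ∈ comp g, (∀ y : D, x * y = y * x) → x = 0) →
      ((¬∃ t : ↥T, (t : G) * t = f) ∧ ∀ t : ↥T, (t : G) * t = 1)) ∧
    -- Case B: `Z(D) = ℝ` trivially graded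
    ((∀ g : G, g ≠ 1 → ∀ x ∈ comp g, (∀ y : D, x * y = y * x) → x = 0) →
      ∀ t : ↥T, (t : G) * t = 1) := by
  classical
  obtain ⟨hInt, hone, hmul, hunit⟩ := hgda
  constructor
  · rintro f hf1 ⟨x, hx0, hxf, hxc⟩ honly
    have hnontriv : Nontrivial D := ⟨⟨x, 0, hx0⟩⟩
    have sqcases : ∀ s : ↥T, (s:G) * (s:G) = 1 ∨ (s:G) * (s:G) = f := by
      intro s
      obtain ⟨y, hy0, hym, hyc⟩ := hsq s
      by_contra hkk
      push_neg at hkk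
      exact hy0 (honly _ hkk.1 hkk.2 y hym hyc)
    have hnof : ¬∃ t : ↥T, (t : G) * t = f := by
      rintro ⟨t, ht⟩

      haveI := hfdD
      obtain ⟨xu, hxuval⟩ := hunit f x hxf hx0
      set xi : D := ((xu⁻¹ : Dˣ) : D) with hxi_def
      have hxinv1 : x * xi = 1 := by rw [hxi_def, ← hxuval]; exact xu.mul_inv
      have hxinv2 : xi * x = 1 := by rw [hxi_def, ← hxuval]; exact xu.inv_mul
      have half : ∀ y : D, y = -y → y = 0 := by
        intro y hy
        have h2 : (2:ℝ) • y = 0 := by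
          rw [two_smul]
          nth_rewrite 2 [hy]
          rw [add_neg_cancel]
        have h3 := congrArg (fun z : D => (2⁻¹:ℝ) • z) h2
        simp only [smul_smul, smul_zero] at h3
        norm_num at h3
        exact h3
      have hff : f * f = 1 := by
        have hxx0 : x * x ≠ 0 := by
          intro h
          apply hx0
          have h1 : xi * (x * x) = x := by rw [← mul_assoc, hxinv2, one_mul]
          rw [h, mul_zero] at h1
          exact h1.symm
        have hxxc : ∀ y, (x*x)*y = y*(x*x) := by
          intro y
          rw [mul_assoc, hxc y, ← mul_assoc, hxc y, mul_assoc]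
        by_contra hne
        rcases eq_or_ne (f*f) f with h | h
        · exact hf1 (mul_left_cancel (h.trans (mul_one f).symm))
        · exact hxx0 (honly (f*f) hne h (x*x) (hmul f f x x hxf hxf) hxxc)
      have hfinv : f⁻¹ = f := inv_eq_of_mul_eq_one_right hff
      have hxinv_mem : xi ∈ comp f := by
        have h := aux_inv_mem hInt hone hmul hxf hxinv1 hxinv2
        rwa [hfinv] at h
      have hxinvc : ∀ y : D, xi * y = y * xi := by
        intro y
        calc xi * y = xi * y * (x * xi) := by rw [hxinv1, mul_one]
          _ = xi * (y * x) * xi := by noncomm_ring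
          _ = xi * (x * y) * xi := by rw [← hxc y]
          _ = (xi * x) * (y * xi) := by noncomm_ring
          _ = y * xi := by rw [hxinv2, one_mul]
      have hφ1 : φ (1:D) = (1:D) := by
        have h1 := hanti 1 1
        rw [one_mul] at h1
        have h2 : φ (φ (1:D)) = 1 := hinvol 1
        by_cases h0 : φ (1:D) = 0
        · rw [h0, map_zero] at h2
          exact (zero_ne_one h2).elim
        · obtain ⟨v, hv⟩ := hunit 1 (φ 1) (hgr 1 1 hone) h0
          have h3 := congrArg (fun z => ((v⁻¹:Dˣ):D) * z) h1
          simp only [← hv, ← mul_assoc, Units.inv_mul, one_mul] at h3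
          rw [hv] at h3
          exact h3.symm
      -- center structure
      have hxZ : x ∈ Subalgebra.center ℝ D := Subalgebra.mem_center_iff.mpr fun b => (hxc b).symm
      have hfr : Module.finrank ℝ ↥(Subalgebra.center ℝ D) ≤ 2 := by
        rcases hZ with h | h | h
        · obtain ⟨e⟩ := h
          rw [e.toLinearEquiv.finrank_eq, Module.finrank_self]; norm_num
        · obtain ⟨e⟩ := h
          rw [e.toLinearEquiv.finrank_eq, Complex.finrank_real_complex]
        · obtain ⟨e⟩ := h
          rw [e.toLinearEquiv.finrank_eq, Module.finrank_prod, Module.finrank_self]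
      have hind : LinearIndependent ℝ ![(1:D), x] := by
        rw [linearIndependent_fin2]
        refine ⟨by simpa using hx0, fun a ha => ?_⟩
        simp only [Matrix.cons_val_one, Matrix.head_cons, Matrix.cons_val_zero] at ha
        have h1 : (1:D) ∈ comp f := ha ▸ Submodule.smul_mem _ a hxf
        exact one_ne_zero (aux_mem_mem_ne hInt hf1 h1 hone)
      have hspan : Submodule.span ℝ ({(1:D), x} : Set D)
          = Subalgebra.toSubmodule (Subalgebra.center ℝ D) := by
        apply Submodule.eq_of_le_of_finrank_le
        · rw [Submodule.span_le]
          intro y hy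
          simp only [Set.mem_insert_iff, Set.mem_singleton_iff] at hy
          rcases hy with rfl | rfl
          · exact Subalgebra.one_mem _
          · exact hxZ
        · have h2 : Module.finrank ℝ ↥(Submodule.span ℝ ({(1:D), x} : Set D)) = 2 := by
            have h3 := finrank_span_eq_card (R := ℝ) hind
            have h4 : Set.range ![(1:D), x] = {(1:D), x} := by
              ext y
              simp only [Set.mem_range, Fin.exists_fin_two, Matrix.cons_val_zero,
                Matrix.cons_val_one, Matrix.head_cons, Set.mem_insert_iff, Set.mem_singleton_iff]
              tauto
            rw [h4] at h3
            simpa using h3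
          rw [h2]
          exact hfr
      have hdecomp : ∀ z ∈ Subalgebra.center ℝ D, ∃ a b : ℝ, z = a • (1:D) + b • x := by
        intro z hz
        have hz2 : z ∈ Submodule.span ℝ ({(1:D), x} : Set D) := by
          rw [hspan]
          exact (Subalgebra.mem_toSubmodule _).mpr hz
        obtain ⟨a, b, hab⟩ := Submodule.mem_span_pair.mp hz2
        exact ⟨a, b, hab.symm⟩
      have hφZ : ∀ z, z ∈ Subalgebra.center ℝ D → φ z ∈ Subalgebra.center ℝ D := by
        intro z hz
        rw [Subalgebra.mem_center_iff] at hz ⊢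
        intro b
        calc b * φ z = φ (φ b) * φ z := by rw [hinvol]
          _ = φ (z * φ b) := (hanti z (φ b)).symm
          _ = φ (φ b * z) := by rw [← hz (φ b)]
          _ = φ z * φ (φ b) := hanti (φ b) z
          _ = φ z * b := by rw [hinvol]
      have hφx_eq : ∃ b : ℝ, φ x = b • x := by
        obtain ⟨a, b, hab⟩ := hdecomp (φ x) (hφZ x hxZ)
        refine ⟨b, ?_⟩
        have h1 : a • (1:D) = φ x - b • x := by rw [hab]; abel
        have h2 : a • (1:D) ∈ comp f := by
          rw [h1]
          exact Submodule.sub_mem _ (hgr f x hxf) (Submodule.smul_mem _ _ hxf)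
        have h3 : a • (1:D) ∈ comp 1 := Submodule.smul_mem _ _ hone
        have h4 : a • (1:D) = 0 := aux_mem_mem_ne hInt (Ne.symm hf1) h3 h2
        rw [hab, h4, zero_add]
      obtain ⟨c, hφxc⟩ := hφx_eq
      have hcc : c * c = 1 := by
        have h1 : x = (c * c) • x := by
          conv_lhs => rw [← hinvol x]
          rw [hφxc, map_smul, hφxc, smul_smul]
        by_contra hne
        have h5 : (1 - c*c) ≠ 0 := sub_ne_zero.mpr (fun hh => hne hh.symm)
        have h2 : (1 - c*c) • x = 0 := by
          rw [sub_smul, one_smul, sub_eq_zero]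
          exact h1
        have h6 := congrArg (fun y : D => (1 - c*c)⁻¹ • y) h2
        simp only [smul_smul, inv_mul_cancel₀ h5, one_smul, smul_zero] at h6
        exact hx0 h6
      have hkindprem : ¬∀ z ∈ Subalgebra.center ℝ D, ∃ r : ℝ, z = algebraMap ℝ D r := by
        intro hall
        obtain ⟨r, hr⟩ := hall x hxZ
        have h1 : x ∈ comp 1 := by
          rw [hr, Algebra.algebraMap_eq_smul_one]
          exact Submodule.smul_mem _ _ hone
        exact hx0 (aux_mem_mem_ne hInt hf1 hxf h1)
      obtain ⟨z, hzZ, hzφ⟩ := hkind hkindprem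
      have hcneg : c = -1 := by
        rcases mul_self_eq_one_iff.mp hcc with h | h
        · exfalso
          apply hzφ
          obtain ⟨a, b, hab⟩ := hdecomp z hzZ
          rw [hab, map_add, map_smul, map_smul, hφ1, hφxc, h, one_smul]
        · exact h
      have hφx : φ x = -x := by rw [hφxc, hcneg, neg_one_smul]
      have hφxi : φ xi = -xi := by
        have h1 : φ xi * (-x) = 1 := by rw [← hφx, ← hanti, hxinv1, hφ1]
        have h3 : (-x) * (-xi) = 1 := by rw [neg_mul_neg, hxinv1]
        calc φ xi = φ xi * ((-x) * (-xi)) := by rw [h3, mul_one]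
          _ = (φ xi * (-x)) * (-xi) := by rw [mul_assoc]
          _ = -xi := by rw [h1, one_mul]
      -- the key bundle for square roots of f
      have key : ∀ r : ↥T, (r:G) * (r:G) = f →
          ((X r : D) * (X r : D) * xi ∈ comp 1 ∧ (X r : D) * (X r : D) * xi ≠ 0)
          ∧ φ ((X r : D) * (X r : D) * xi) = -((X r : D) * (X r : D) * xi)
          ∧ ((X r : D) * ((X r : D) * (X r : D) * xi)
              = ((X r : D) * (X r : D) * xi) * (X r : D)) := by
        intro r hr
        have hXr2 : (X r : D) * (X r : D) ∈ comp f := by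
          have h := hmul _ _ _ _ (hX r) (hX r)
          rwa [hr] at h
        refine ⟨⟨?_, ?_⟩, ?_, ?_⟩
        · have h := hmul f f _ _ hXr2 hxinv_mem
          rwa [hff] at h
        · intro h0
          rw [hxi_def] at h0
          have h1 : ((X r * X r * xu⁻¹ : Dˣ) : D) = 0 := by push_cast; exact h0
          exact Units.ne_zero _ h1
        · have hXr2φ : φ ((X r : D) * (X r : D)) = (X r : D) * (X r : D) := by
            rw [hanti, hφX r]
            rcases hη r with h | h <;> rw [h] <;> simp
          rw [hanti, hφxi, hXr2φ, neg_mul, hxinvc]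
        · conv_rhs => rw [mul_assoc, hxinvc]
          noncomm_ring
      obtain ⟨⟨hd1, hd0⟩, hdφ, hdu⟩ := key t ht
      set d : D := (X t : D) * (X t : D) * xi with hd_def
      obtain ⟨du, hduval⟩ := hunit 1 d hd1 hd0
      obtain ⟨r0, hr0nn, hr0⟩ := (hconj d hd1).2
      have hdd : d * d = algebraMap ℝ D (-r0) := by
        rw [hdφ, mul_neg, neg_eq_iff_eq_neg] at hr0
        rw [hr0, map_neg]
      have hr0pos : 0 < r0 := by
        rcases hr0nn.lt_or_eq with h | h
        · exact h
        · exfalso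
          have h1 : d * d = 0 := by rw [hdd, ← h, neg_zero, map_zero]
          have h2 : ((du * du : Dˣ) : D) = 0 := by rw [Units.val_mul, hduval]; exact h1
          exact Units.ne_zero _ h2
      have hr0' : (-r0 : ℝ) ≠ 0 := neg_ne_zero.mpr hr0pos.ne'
      have hcent : (∀ s : ↥T, (X s : D) * d = d * (X s : D)) ∧ (∀ z ∈ comp (1:G), z * d = d * z) := by
        by_cases hcomm : ∀ z ∈ comp (1:G), ∀ w ∈ comp (1:G), z * w = w * z
        · -- commutative identity component
          have hEneg : ∀ z ∈ comp (1:G), φ z = -z → ∃ q : ℝ, d * z = algebraMap ℝ D q := by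
            intro z hz1 hzφ
            have hdz1 : d * z ∈ comp 1 := by
              have h := hmul 1 1 _ _ hd1 hz1
              rwa [one_mul] at h
            obtain ⟨rr, hrr⟩ := (hconj (d*z) hdz1).1
            have h2 : φ (d * z) = d * z := by
              rw [hanti, hzφ, hdφ, neg_mul_neg, hcomm z hz1 d hd1]
            rw [h2] at hrr
            refine ⟨rr / 2, ?_⟩
            have h3 : (2:ℝ) • (d * z) = algebraMap ℝ D rr := by
              rw [two_smul]; exact hrr
            have h4 : d * z = (2⁻¹ : ℝ) • algebraMap ℝ D rr := by
              rw [← h3, smul_smul]; norm_num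
            rw [h4, Algebra.algebraMap_eq_smul_one, Algebra.algebraMap_eq_smul_one, smul_smul]
            congr 1
            ring
          have hmulqd : ∀ z, z ∈ comp (1:G) → φ z = -z → ∃ q : ℝ, z = q • d := by
            intro z hz1 hzφ
            obtain ⟨q, hq⟩ := hEneg z hz1 hzφ
            refine ⟨q / (-r0), ?_⟩
            have h2 : d * ((q / (-r0)) • d) = algebraMap ℝ D q := by
              rw [mul_smul_comm, hdd, Algebra.algebraMap_eq_smul_one,
                Algebra.algebraMap_eq_smul_one, smul_smul, div_mul_cancel₀ q hr0']
            have h3 : d * (z - (q / (-r0)) • d) = 0 := by rw [mul_sub, hq, h2, sub_self]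
            have h5 : ((du⁻¹:Dˣ):D) * (d * (z - (q / (-r0)) • d)) = 0 := by rw [h3, mul_zero]
            rw [← hduval, ← mul_assoc, Units.inv_mul, one_mul, sub_eq_zero] at h5
            rw [h5, hduval]
          have hXs : ∀ s : ↥T, (X s : D) * d = d * (X s : D) := by
            intro s
            have hvvi : (X s : D) * (((X s)⁻¹ : Dˣ) : D) = 1 := (X s).mul_inv
            have hviv : (((X s)⁻¹ : Dˣ) : D) * (X s : D) = 1 := (X s).inv_mul
            have hvi_mem : (((X s)⁻¹ : Dˣ) : D) ∈ comp ((s:G))⁻¹ :=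
              aux_inv_mem hInt hone hmul (hX s) hvvi hviv
            have hd'1 : (X s : D) * d * (((X s)⁻¹ : Dˣ) : D) ∈ comp 1 := by
              have h1 := hmul _ _ _ _ (hmul _ _ _ _ (hX s) hd1) hvi_mem
              simpa using h1
            have hd'sq : ((X s : D) * d * (((X s)⁻¹ : Dˣ) : D))
                * ((X s : D) * d * (((X s)⁻¹ : Dˣ) : D)) = algebraMap ℝ D (-r0) := by
              have ha1 : ((X s : D) * d * (((X s)⁻¹ : Dˣ) : D))
                  * ((X s : D) * d * (((X s)⁻¹ : Dˣ) : D))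
                  = (X s : D) * d * ((((X s)⁻¹ : Dˣ) : D) * (X s : D)) * d * (((X s)⁻¹ : Dˣ) : D) := by
                noncomm_ring
              rw [ha1, hviv, mul_one]
              have ha2 : (X s : D) * d * d * (((X s)⁻¹ : Dˣ) : D)
                  = (X s : D) * (d * d) * (((X s)⁻¹ : Dˣ) : D) := by noncomm_ring
              rw [ha2, hdd, Algebra.algebraMap_eq_smul_one, mul_smul_comm, smul_mul_assoc,
                mul_one, hvvi]
            have hd'cases : (X s : D) * d * (((X s)⁻¹ : Dˣ) : D) = d
                ∨ (X s : D) * d * (((X s)⁻¹ : Dˣ) : D) = -d := by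
              by_cases h1 : (X s : D) * d * (((X s)⁻¹ : Dˣ) : D) - d = 0
              · left; exact sub_eq_zero.mp h1
              · right
                have hfac : ((X s : D) * d * (((X s)⁻¹ : Dˣ) : D) - d)
                    * ((X s : D) * d * (((X s)⁻¹ : Dˣ) : D) + d) = 0 := by
                  have hcomm' : ((X s : D) * d * (((X s)⁻¹ : Dˣ) : D)) * d
                      = d * ((X s : D) * d * (((X s)⁻¹ : Dˣ) : D)) := hcomm _ hd'1 d hd1
                  have hexp : ((X s : D) * d * (((X s)⁻¹ : Dˣ) : D) - d)
                      * ((X s : D) * d * (((X s)⁻¹ : Dˣ) : D) + d)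
                      = ((X s : D) * d * (((X s)⁻¹ : Dˣ) : D)) * ((X s : D) * d * (((X s)⁻¹ : Dˣ) : D))
                        + (((X s : D) * d * (((X s)⁻¹ : Dˣ) : D)) * d
                          - d * ((X s : D) * d * (((X s)⁻¹ : Dˣ) : D))) - d * d := by
                    noncomm_ring
                  rw [hexp, hcomm', sub_self, add_zero, hd'sq, hdd, sub_self]
                by_contra h2
                have h2' : (X s : D) * d * (((X s)⁻¹ : Dˣ) : D) + d ≠ 0 := by
                  intro hz
                  exact h2 (eq_neg_of_add_eq_zero_left hz)
                obtain ⟨u1, hu1⟩ := hunit 1 _ (Submodule.sub_mem _ hd'1 hd1) h1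
                obtain ⟨u2, hu2⟩ := hunit 1 _ (Submodule.add_mem _ hd'1 hd1) h2'
                have h3 : ((u1*u2 : Dˣ):D) = 0 := by rw [Units.val_mul, hu1, hu2]; exact hfac
                exact Units.ne_zero _ h3
            have hback : ((X s : D) * d * (((X s)⁻¹ : Dˣ) : D)) * (X s : D) = (X s : D) * d := by
              rw [mul_assoc, hviv, mul_one]
            rcases hd'cases with hcase | hcase
            · rw [hcase] at hback
              exact hback.symm
            · exfalso
              rw [hcase] at hback
              have hvd : (X s : D) * d = -(d * (X s : D)) := by rw [← hback, neg_mul]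
              rcases sqcases s with hs2 | hs2
              · -- s² = 1, use t*s
                have hts2 : ((t*s : ↥T):G) * ((t*s : ↥T):G) = f := by
                  push_cast
                  rw [mul_mul_mul_comm, ht, hs2, mul_one]
                obtain ⟨⟨hdr1, hdr0⟩, hdrφ, hdrv⟩ := key (t*s) hts2
                obtain ⟨q, hq⟩ := hmulqd _ hdr1 hdrφ
                have hqne : q ≠ 0 := by
                  rintro rfl
                  rw [zero_smul] at hq
                  exact hdr0 hq
                have hXrd : (X (t*s) : D) * d = d * (X (t*s) : D) := by
                  have h1 : (X (t*s) : D) * (q • d) = (q • d) * (X (t*s) : D) := by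
                    rw [← hq]; exact hdrv
                  rw [mul_smul_comm, smul_mul_assoc] at h1
                  have h2 := congrArg (fun y : D => q⁻¹ • y) h1
                  simp only [smul_smul, inv_mul_cancel₀ hqne, one_smul] at h2
                  exact h2
                have hri1 : (X (t*s) : D) * (((X (t*s))⁻¹ : Dˣ) : D) = 1 := (X (t*s)).mul_inv
                have hri2 : (((X (t*s))⁻¹ : Dˣ) : D) * (X (t*s) : D) = 1 := (X (t*s)).inv_mul
                have hw_mem : (X t : D) * (X s : D) ∈ comp ((t:G) * (s:G)) :=
                  hmul _ _ _ _ (hX t) (hX s)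
                have hri_mem : (((X (t*s))⁻¹ : Dˣ) : D) ∈ comp (((t*s : ↥T):G))⁻¹ :=
                  aux_inv_mem hInt hone hmul (hX (t*s)) hri1 hri2
                have hμ_mem : (X t : D) * (X s : D) * (((X (t*s))⁻¹ : Dˣ) : D) ∈ comp 1 := by
                  have h1 := hmul _ _ _ _ hw_mem hri_mem
                  have h2 : (t:G) * (s:G) * (((t*s : ↥T):G))⁻¹ = 1 := by
                    push_cast
                    group
                  rwa [h2] at h1
                have hμd := hcomm _ hμ_mem d hd1
                have hwd : ((X t : D) * (X s : D)) * d = d * ((X t : D) * (X s : D)) := by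
                  calc ((X t : D) * (X s : D)) * d
                      = ((X t : D) * (X s : D) * (((X (t*s))⁻¹ : Dˣ) : D)) * ((X (t*s) : D) * d) := by
                        conv_lhs => rw [show ((X t : D) * (X s : D))
                          = (X t : D) * (X s : D) * ((((X (t*s))⁻¹ : Dˣ) : D) * (X (t*s) : D)) from by
                            rw [hri2, mul_one]]
                        noncomm_ring
                    _ = ((X t : D) * (X s : D) * (((X (t*s))⁻¹ : Dˣ) : D)) * (d * (X (t*s) : D)) := by
                        rw [hXrd]
                    _ = (((X t : D) * (X s : D) * (((X (t*s))⁻¹ : Dˣ) : D)) * d) * (X (t*s) : D) := by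
                        noncomm_ring
                    _ = (d * ((X t : D) * (X s : D) * (((X (t*s))⁻¹ : Dˣ) : D))) * (X (t*s) : D) := by
                        rw [hμd]
                    _ = d * ((X t : D) * (X s : D) * ((((X (t*s))⁻¹ : Dˣ) : D) * (X (t*s) : D))) := by
                        noncomm_ring
                    _ = d * ((X t : D) * (X s : D)) := by rw [hri2, mul_one]
                have hwd2 : ((X t : D) * (X s : D)) * d = -(d * ((X t : D) * (X s : D))) := by
                  calc ((X t : D) * (X s : D)) * d = (X t : D) * ((X s : D) * d) := by rw [mul_assoc]
                    _ = (X t : D) * (-(d * (X s : D))) := by rw [hvd]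
                    _ = -(((X t : D) * d) * (X s : D)) := by noncomm_ring
                    _ = -((d * (X t : D)) * (X s : D)) := by rw [hdu]
                    _ = -(d * ((X t : D) * (X s : D))) := by rw [mul_assoc]
                have h0 : d * ((X t : D) * (X s : D)) = 0 := by
                  apply half
                  have h1 := hwd2
                  rw [hwd] at h1
                  exact h1
                have h3 : ((du * (X t * X s) : Dˣ) : D) = 0 := by
                  rw [Units.val_mul, hduval, Units.val_mul]
                  exact h0
                exact Units.ne_zero _ h3
              · -- s² = f
                obtain ⟨⟨hds1, hds0⟩, hdsφ, hdsv⟩ := key s hs2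
                obtain ⟨q, hq⟩ := hmulqd _ hds1 hdsφ
                have hqne : q ≠ 0 := by
                  rintro rfl
                  rw [zero_smul] at hq
                  exact hds0 hq
                have hvd' : (X s : D) * d = d * (X s : D) := by
                  have h1 : (X s : D) * (q • d) = (q • d) * (X s : D) := by
                    rw [← hq]; exact hdsv
                  rw [mul_smul_comm, smul_mul_assoc] at h1
                  have h2 := congrArg (fun y : D => q⁻¹ • y) h1
                  simp only [smul_smul, inv_mul_cancel₀ hqne, one_smul] at h2
                  exact h2
                have h0 : d * (X s : D) = 0 := by
                  apply half
                  rw [hvd'] at hvd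
                  exact hvd
                have h3 : ((du * X s : Dˣ) : D) = 0 := by
                  rw [Units.val_mul, hduval]; exact h0
                exact Units.ne_zero _ h3
          exact ⟨hXs, fun z hz => hcomm z hz d hd1⟩
        · -- noncommutative identity component
          have hXc := hXcent hcomm
          refine ⟨fun s => hXc s d hd1, ?_⟩
          intro z hz
          have h1 : (X t : D) * z = z * (X t : D) := hXc t z hz
          rw [hd_def]
          calc z * ((X t:D) * (X t:D) * xi) = (z * (X t:D)) * (X t:D) * xi := by noncomm_ring
            _ = ((X t:D) * z) * (X t:D) * xi := by rw [h1]
            _ = (X t:D) * (z * (X t:D)) * xi := by noncomm_ring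
            _ = (X t:D) * ((X t:D) * z) * xi := by rw [h1]
            _ = (X t:D) * (X t:D) * (z * xi) := by noncomm_ring
            _ = (X t:D) * (X t:D) * (xi * z) := by rw [← hxinvc z]
            _ = ((X t:D) * (X t:D) * xi) * z := by noncomm_ring
      obtain ⟨hcentX, hcentE⟩ := hcent
      have hdC : ∀ y : D, d * y = y * d := by
        let C : Submodule ℝ D :=
          { carrier := {y | d * y = y * d}
            add_mem' := by
              intro a b ha hb
              simp only [Set.mem_setOf_eq] at *
              rw [mul_add, add_mul, ha, hb]
            zero_mem' := by simp
            smul_mem' := by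
              intro r y hy
              simp only [Set.mem_setOf_eq] at *
              rw [mul_smul_comm, smul_mul_assoc, hy] }
        have hle : ∀ g : G, comp g ≤ C := by
          intro g y hy
          by_cases hy0 : y = 0
          · rw [hy0]; exact C.zero_mem
          · have hgT : g ∈ T := by
              apply (hT g).mp
              intro hbot
              rw [hbot, Submodule.mem_bot] at hy
              exact hy0 hy
            have hXs_mem : (X ⟨g, hgT⟩ : D) ∈ comp g := hX ⟨g, hgT⟩
            have hsi1 : (X ⟨g, hgT⟩ : D) * ((X ⟨g, hgT⟩)⁻¹ : Dˣ) = 1 := (X ⟨g, hgT⟩).mul_inv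
            have hsi2 : (((X ⟨g, hgT⟩)⁻¹ : Dˣ) : D) * (X ⟨g, hgT⟩ : D) = 1 := (X ⟨g, hgT⟩).inv_mul
            have hz1 : y * (((X ⟨g, hgT⟩)⁻¹ : Dˣ) : D) ∈ comp 1 := by
              have h1 := hmul _ _ _ _ hy (aux_inv_mem hInt hone hmul hXs_mem hsi1 hsi2)
              simpa using h1
            have hy' : y = (y * (((X ⟨g, hgT⟩)⁻¹ : Dˣ) : D)) * (X ⟨g, hgT⟩ : D) := by
              rw [mul_assoc, hsi2, mul_one]
            show d * y = y * d
            calc d * y = d * ((y * (((X ⟨g, hgT⟩)⁻¹ : Dˣ) : D)) * (X ⟨g, hgT⟩ : D)) := by rw [← hy']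
              _ = (d * (y * (((X ⟨g, hgT⟩)⁻¹ : Dˣ) : D))) * (X ⟨g, hgT⟩ : D) := by noncomm_ring
              _ = ((y * (((X ⟨g, hgT⟩)⁻¹ : Dˣ) : D)) * d) * (X ⟨g, hgT⟩ : D) := by
                  rw [hcentE _ hz1]
              _ = (y * (((X ⟨g, hgT⟩)⁻¹ : Dˣ) : D)) * (d * (X ⟨g, hgT⟩ : D)) := by noncomm_ring
              _ = (y * (((X ⟨g, hgT⟩)⁻¹ : Dˣ) : D)) * ((X ⟨g, hgT⟩ : D) * d) := by
                  rw [hcentX ⟨g, hgT⟩]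
              _ = ((y * (((X ⟨g, hgT⟩)⁻¹ : Dˣ) : D)) * (X ⟨g, hgT⟩ : D)) * d := by noncomm_ring
              _ = y * d := by rw [← hy']
        have htop : (⊤ : Submodule ℝ D) ≤ C := by
          rw [← hInt.submodule_iSup_eq_top]
          exact iSup_le hle
        intro y
        exact htop (Submodule.mem_top (x := y))
      have hdZ : d ∈ Subalgebra.center ℝ D := Subalgebra.mem_center_iff.mpr fun b => (hdC b).symm
      obtain ⟨a, b, hab⟩ := hdecomp d hdZ
      have hb0 : b • x = 0 := by
        have h1 : b • x = d - a • 1 := by rw [hab]; abel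
        have h2 : b • x ∈ comp 1 := by
          rw [h1]
          exact Submodule.sub_mem _ hd1 (Submodule.smul_mem _ _ hone)
        exact aux_mem_mem_ne hInt hf1 (Submodule.smul_mem _ _ hxf) h2
      have hda : d = a • (1:D) := by rw [hab, hb0, add_zero]
      have hcontra : φ d = d := by rw [hda, map_smul, hφ1]
      rw [hdφ] at hcontra
      exact hd0 (half d hcontra.symm)

    refine ⟨hnof, fun s => ?_⟩
    rcases sqcases s with h | h
    · exact h
    · exact absurd ⟨s, h⟩ hnof
  · intro honly t
    obtain ⟨y, hy0, hym, hyc⟩ := hsq t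
    by_contra hne
    exact hy0 (honly _ hne y hym hyc)
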